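/- For every number of layers L and every choice of layer data as in the EIGN recursion, and for all direction-consistent orientations O, Ô and all inputs X_equ ∈ ℂ^{E×d_equ}, X_inv ∈ ℂ^{E×d_inv}, the equivariant output satisfies H^L_equ(Δ_{O,Ô} · X_equ, X_inv, Ô) = Δ_{O,Ô} · H^L_equ(X_equ, X_inv, O); that is, the equivariant output of EIGN is a jointly orientation-equivariant mapping. -/

import Mathlib

open Matrix

/-- `O` assigns to each edge either its endpoint pair `(s e, t e)` or the reversed pair. -/
def IsOrientation {V E : Type*} (s t : E → V) (O : E → V × V) : Prop :=
  ∀ e, O e = (s e, t e) ∨ O e = (t e, s e)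

/-- A direction-consistent orientation: an orientation which agrees with the direction
`(s e, t e)` on every directed edge. -/
def DirConsistent {V E : Type*} (s t : E → V) (dir : E → Bool) (O : E → V × V) : Prop :=
  IsOrientation s t O ∧ ∀ e, dir e = true → O e = (s e, t e)

/-- The magnetic equivariant boundary operator. -/
noncomputable def Bequ {V E : Type*} [DecidableEq V] (q : ℝ) (s t : E → V) (dir : E → Bool)
    (O : E → V × V) : Matrix V E ℂ :=
  Matrix.of fun v e =>
    if dir e then
      if v = s e then -Complex.exp (Complex.I * (Real.pi * q : ℂ))
      else if v = t e then Complex.exp (-(Complex.I * (Real.pi * q : ℂ)))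
      else 0
    else
      if v = (O e).1 then -1
      else if v = (O e).2 then 1
      else 0

/-- The magnetic invariant boundary operator. -/
noncomputable def Binv {V E : Type*} [DecidableEq V] (q : ℝ) (s t : E → V) (dir : E → Bool) :
    Matrix V E ℂ :=
  Matrix.of fun v e =>
    if dir e then
      if v = s e then Complex.exp (Complex.I * (Real.pi * q : ℂ))
      else if v = t e then Complex.exp (-(Complex.I * (Real.pi * q : ℂ)))
      else 0
    else
      if v = s e ∨ v = t e then 1 else 0

/-- The orientation-change matrix `Δ_{O,Ô}`. -/
noncomputable def Delta {V E : Type*} [DecidableEq V] [DecidableEq E] (O Ohat : E → V × V) :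
    Matrix E E ℂ :=
  Matrix.diagonal fun e => if O e = Ohat e then 1 else -1

/-- The EIGN recursion: given boundary data `(q, s, t, dir)`, activations `σe, σi`,
per-layer feature dimensions `de, di` (with intermediate node-level dimensions
`ke, kie, ki, kei`), per-layer node feature transformations `hequ, hie, hinv, hei`,
per-layer weight matrices, an orientation `O`, and inputs `Xe, Xi`, this returns for each
layer `l` the pair `(H^l_equ, H^l_inv)` of equivariant and invariant representations. -/
noncomputable def EIGN {V E : Type} [Fintype V] [Fintype E] [DecidableEq V]
    (q : ℝ) (s t : E → V) (dir : E → Bool)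
    (σe σi : ℂ → ℂ)
    (de di ke kie ki kei : ℕ → ℕ)
    (hequ : ∀ l, Matrix V (Fin (de l)) ℂ → Matrix V (Fin (ke l)) ℂ)
    (hie : ∀ l, Matrix V (Fin (di l)) ℂ → Matrix V (Fin (kie l)) ℂ)
    (hinv : ∀ l, Matrix V (Fin (di l)) ℂ → Matrix V (Fin (ki l)) ℂ)
    (hei : ∀ l, Matrix V (Fin (de l)) ℂ → Matrix V (Fin (kei l)) ℂ)
    (Wee : ∀ l, Matrix (Fin (ke l)) (Fin (de (l + 1))) ℂ)
    (Wie : ∀ l, Matrix (Fin (kie l)) (Fin (de (l + 1))) ℂ)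
    (We : ∀ l, Matrix (Fin (de l)) (Fin (de (l + 1))) ℂ)
    (Wii : ∀ l, Matrix (Fin (ki l)) (Fin (di (l + 1))) ℂ)
    (Wei : ∀ l, Matrix (Fin (kei l)) (Fin (di (l + 1))) ℂ)
    (Wi : ∀ l, Matrix (Fin (di l)) (Fin (di (l + 1))) ℂ)
    (WFee : ∀ l, Matrix (Fin (de (l + 1))) (Fin (de (l + 1))) ℂ)
    (WFie : ∀ l, Matrix (Fin (di (l + 1))) (Fin (de (l + 1))) ℂ)
    (WFii : ∀ l, Matrix (Fin (di (l + 1))) (Fin (di (l + 1))) ℂ)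
    (WFei : ∀ l, Matrix (Fin (de (l + 1))) (Fin (di (l + 1))) ℂ)
    (O : E → V × V)
    (Xe : Matrix E (Fin (de 0)) ℂ) (Xi : Matrix E (Fin (di 0)) ℂ) :
    (l : ℕ) → Matrix E (Fin (de l)) ℂ × Matrix E (Fin (di l)) ℂ
  | 0 => (Xe, Xi)
  | l + 1 =>
      let H := EIGN q s t dir σe σi de di ke kie ki kei hequ hie hinv hei
        Wee Wie We Wii Wei Wi WFee WFie WFii WFei O Xe Xi l
      let Ze := ((Bequ q s t dir O)ᴴ * hequ l (Bequ q s t dir O * H.1) * Wee l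
                + (Bequ q s t dir O)ᴴ * hie l (Binv q s t dir * H.2) * Wie l
                + H.1 * We l).map σe
      let Zi := ((Binv q s t dir)ᴴ * hinv l (Binv q s t dir * H.2) * Wii l
                + (Binv q s t dir)ᴴ * hei l (Bequ q s t dir O * H.1) * Wei l
                + H.2 * Wi l).map σi
      (((Ze * WFee l).hadamard (Zi * WFie l) + Ze).map σe,
       ((Zi * WFii l).hadamard ((Ze * WFei l).map fun z => ((‖z‖ : ℝ) : ℂ)) + Zi).map σi)


section Aux

variable {E m : Type*} [DecidableEq E]

lemma diag_pm_sq [Fintype E] (d : E → ℂ) (hd : ∀ e, d e = 1 ∨ d e = -1) :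
    Matrix.diagonal d * Matrix.diagonal d = 1 := by
  rw [Matrix.diagonal_mul_diagonal]
  ext i j
  rcases hd i with h | h <;> simp [Matrix.diagonal_apply, Matrix.one_apply, h]

lemma diag_pm_conjT (d : E → ℂ) (hd : ∀ e, d e = 1 ∨ d e = -1) :
    (Matrix.diagonal d)ᴴ = Matrix.diagonal d := by
  rw [Matrix.diagonal_conjTranspose]
  ext i j
  rcases hd i with h | h <;> simp [Matrix.diagonal_apply, h, Pi.star_apply]

lemma map_diag_mul [Fintype E] (d : E → ℂ) (hd : ∀ e, d e = 1 ∨ d e = -1)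
    (σ : ℂ → ℂ) (hσ : ∀ x, σ (-x) = -σ x) (M : Matrix E m ℂ) :
    (Matrix.diagonal d * M).map σ = Matrix.diagonal d * M.map σ := by
  ext i j
  rcases hd i with h | h <;>
    simp [Matrix.map_apply, Matrix.diagonal_mul, h, hσ]

lemma hadamard_diag_mul [Fintype E] (d : E → ℂ) (A B : Matrix E m ℂ) :
    (Matrix.diagonal d * A).hadamard B = Matrix.diagonal d * (A.hadamard B) := by
  ext i j
  simp [Matrix.hadamard_apply, Matrix.diagonal_mul, mul_assoc]

lemma abs_map_diag_mul [Fintype E] (d : E → ℂ) (hd : ∀ e, d e = 1 ∨ d e = -1)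
    (M : Matrix E m ℂ) :
    (Matrix.diagonal d * M).map (fun z => ((‖z‖ : ℝ) : ℂ))
      = M.map (fun z => ((‖z‖ : ℝ) : ℂ)) := by
  ext i j
  rcases hd i with h | h <;>
    simp [Matrix.map_apply, Matrix.diagonal_mul, h]

end Aux

lemma Bequ_mul_delta {V E : Type*} [DecidableEq V] [DecidableEq E] [Fintype E]
    (q : ℝ) (s t : E → V) (hst : ∀ e, s e ≠ t e) (dir : E → Bool)
    (O Ohat : E → V × V) (hO : DirConsistent s t dir O) (hOhat : DirConsistent s t dir Ohat) :
    Bequ q s t dir Ohat = Bequ q s t dir O * Delta O Ohat := by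
  ext v e
  rw [Delta, Matrix.mul_diagonal]
  by_cases hdir : dir e
  · have h1 := hO.2 e hdir
    have h2 := hOhat.2 e hdir
    simp [Bequ, hdir, h1.trans h2.symm]
  · by_cases h : O e = Ohat e
    · simp [Bequ, hdir, h]
    · rw [if_neg h]
      rcases hO.1 e with h1 | h1 <;> rcases hOhat.1 e with h2 | h2 <;>
        first
        | exact absurd (h1.trans h2.symm) h
        | · simp only [Bequ, Matrix.of_apply, hdir, Bool.false_eq_true, if_false, h1, h2]
            split_ifs with hv1 hv2 <;>
              first
              | exact absurd (hv2.symm.trans hv1) (hst e)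
              | exact absurd (hv1.symm.trans hv2) (hst e)
              | exact absurd ((hv2.symm.trans hv1).symm) (hst e)
              | exact absurd ((hv1.symm.trans hv2).symm) (hst e)
              | norm_num

/-- The equivariant output of EIGN is a jointly orientation-equivariant mapping:
`H^L_equ(Δ_{O,Ô} X_equ, X_inv, Ô) = Δ_{O,Ô} H^L_equ(X_equ, X_inv, O)`. -/
theorem eign_equ_output_jointly_orientation_equivariant
    {V E : Type} [Fintype V] [Fintype E] [DecidableEq V] [DecidableEq E]
    (q : ℝ) (s t : E → V) (hst : ∀ e, s e ≠ t e) (dir : E → Bool)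
    (σe σi : ℂ → ℂ) (hσe : ∀ x, σe (-x) = -σe x)
    (de di ke kie ki kei : ℕ → ℕ)
    (hequ : ∀ l, Matrix V (Fin (de l)) ℂ → Matrix V (Fin (ke l)) ℂ)
    (hie : ∀ l, Matrix V (Fin (di l)) ℂ → Matrix V (Fin (kie l)) ℂ)
    (hinv : ∀ l, Matrix V (Fin (di l)) ℂ → Matrix V (Fin (ki l)) ℂ)
    (hei : ∀ l, Matrix V (Fin (de l)) ℂ → Matrix V (Fin (kei l)) ℂ)
    (Wee : ∀ l, Matrix (Fin (ke l)) (Fin (de (l + 1))) ℂ)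
    (Wie : ∀ l, Matrix (Fin (kie l)) (Fin (de (l + 1))) ℂ)
    (We : ∀ l, Matrix (Fin (de l)) (Fin (de (l + 1))) ℂ)
    (Wii : ∀ l, Matrix (Fin (ki l)) (Fin (di (l + 1))) ℂ)
    (Wei : ∀ l, Matrix (Fin (kei l)) (Fin (di (l + 1))) ℂ)
    (Wi : ∀ l, Matrix (Fin (di l)) (Fin (di (l + 1))) ℂ)
    (WFee : ∀ l, Matrix (Fin (de (l + 1))) (Fin (de (l + 1))) ℂ)
    (WFie : ∀ l, Matrix (Fin (di (l + 1))) (Fin (de (l + 1))) ℂ)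
    (WFii : ∀ l, Matrix (Fin (di (l + 1))) (Fin (di (l + 1))) ℂ)
    (WFei : ∀ l, Matrix (Fin (de (l + 1))) (Fin (di (l + 1))) ℂ)
    (O Ohat : E → V × V)
    (hO : DirConsistent s t dir O) (hOhat : DirConsistent s t dir Ohat)
    (Xe : Matrix E (Fin (de 0)) ℂ) (Xi : Matrix E (Fin (di 0)) ℂ) (L : ℕ) :
    (EIGN q s t dir σe σi de di ke kie ki kei hequ hie hinv hei
        Wee Wie We Wii Wei Wi WFee WFie WFii WFei Ohat (Delta O Ohat * Xe) Xi L).1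
      = Delta O Ohat *
        (EIGN q s t dir σe σi de di ke kie ki kei hequ hie hinv hei
          Wee Wie We Wii Wei Wi WFee WFie WFii WFei O Xe Xi L).1 := by
  set d : E → ℂ := fun e => if O e = Ohat e then 1 else -1 with hdDef
  have hd : ∀ e, d e = 1 ∨ d e = -1 := by
    intro e; simp only [hdDef]; split <;> simp
  have hDelta : Delta O Ohat = Matrix.diagonal d := rfl
  have hB : Bequ q s t dir Ohat = Bequ q s t dir O * Matrix.diagonal d := by
    rw [← hDelta]; exact Bequ_mul_delta q s t hst dir O Ohat hO hOhat
  have hBT : (Bequ q s t dir Ohat)ᴴ = Matrix.diagonal d * (Bequ q s t dir O)ᴴ := by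
    rw [hB, Matrix.conjTranspose_mul, diag_pm_conjT d hd]
  have hBH : ∀ {m : Type} [Fintype m] (M : Matrix E m ℂ),
      Bequ q s t dir Ohat * (Matrix.diagonal d * M) = Bequ q s t dir O * M := by
    intro m _ M
    rw [hB, Matrix.mul_assoc, ← Matrix.mul_assoc (Matrix.diagonal d), diag_pm_sq d hd,
      Matrix.one_mul]
  rw [hDelta]
  suffices h : ∀ L,
      (EIGN q s t dir σe σi de di ke kie ki kei hequ hie hinv hei
        Wee Wie We Wii Wei Wi WFee WFie WFii WFei Ohat (Matrix.diagonal d * Xe) Xi L).1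
      = Matrix.diagonal d *
        (EIGN q s t dir σe σi de di ke kie ki kei hequ hie hinv hei
          Wee Wie We Wii Wei Wi WFee WFie WFii WFei O Xe Xi L).1
      ∧ (EIGN q s t dir σe σi de di ke kie ki kei hequ hie hinv hei
        Wee Wie We Wii Wei Wi WFee WFie WFii WFei Ohat (Matrix.diagonal d * Xe) Xi L).2
      = (EIGN q s t dir σe σi de di ke kie ki kei hequ hie hinv hei
          Wee Wie We Wii Wei Wi WFee WFie WFii WFei O Xe Xi L).2 by
    exact (h L).1
  intro L
  induction L with
  | zero => exact ⟨rfl, rfl⟩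
  | succ l ih =>
    obtain ⟨ih1, ih2⟩ := ih
    simp only [EIGN, ih1, ih2, hBH, hBT]
    set H1 := (EIGN q s t dir σe σi de di ke kie ki kei hequ hie hinv hei
      Wee Wie We Wii Wei Wi WFee WFie WFii WFei O Xe Xi l).1
    set H2 := (EIGN q s t dir σe σi de di ke kie ki kei hequ hie hinv hei
      Wee Wie We Wii Wei Wi WFee WFie WFii WFei O Xe Xi l).2
    have hZe : (Matrix.diagonal d * (Bequ q s t dir O)ᴴ * hequ l (Bequ q s t dir O * H1) * Wee l
          + Matrix.diagonal d * (Bequ q s t dir O)ᴴ * hie l (Binv q s t dir * H2) * Wie l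
          + Matrix.diagonal d * H1 * We l).map σe
        = Matrix.diagonal d *
          ((Bequ q s t dir O)ᴴ * hequ l (Bequ q s t dir O * H1) * Wee l
          + (Bequ q s t dir O)ᴴ * hie l (Binv q s t dir * H2) * Wie l
          + H1 * We l).map σe := by
      rw [← map_diag_mul d hd σe hσe]
      simp only [Matrix.mul_add, Matrix.mul_assoc]
    rw [hZe]
    constructor
    · rw [Matrix.mul_assoc (Matrix.diagonal d) _ (WFee l), hadamard_diag_mul,
        ← Matrix.mul_add, map_diag_mul d hd σe hσe]
    · rw [Matrix.mul_assoc (Matrix.diagonal d) _ (WFei l), abs_map_diag_mul d hd]
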